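/- Let m ≥ 1 and let M_0 ∈ ℂ^m. Then there exist functions λ^1, …, λ^m : ℂ^m → ℂ, each of which is continuous at the point M_0, such that for every M = (a_0, …, a_{m−1}) ∈ ℂ^m one has the factorization λ^m − a_{m−1}λ^{m−1} − ⋯ − a_1λ − a_0 = (λ − λ^1(M)) ⋯ (λ − λ^m(M)) as polynomials in λ. -/

import Mathlib

open Polynomial

namespace RootCont
open Finset


noncomputable def Pm (m : ℕ) (M : Fin m → ℂ) : ℂ[X] :=
  X ^ m - ∑ j : Fin m, C (M j) * X ^ (j : ℕ)

noncomputable def Qp (m : ℕ) (s : Fin m → ℂ) : ℂ[X] :=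
  ∏ i : Fin m, (X - C (s i))

lemma Qp_eq_multiset (m : ℕ) (s : Fin m → ℂ) :
    Qp m s = (((List.ofFn s : Multiset ℂ)).map fun a => X - C a).prod := by
  rw [Qp, Finset.prod_eq_multiset_prod, ← Fin.univ_val_map (f := s), Multiset.map_map]
  rfl

lemma monic_Pm (m : ℕ) (M : Fin m → ℂ) : (Pm m M).Monic :=
  monic_X_pow_sub (degree_sum_fin_lt M)

lemma degree_Pm (m : ℕ) (M : Fin m → ℂ) : (Pm m M).degree = m := by
  rw [Pm, degree_sub_eq_left_of_degree_lt (by simpa [degree_X_pow] using degree_sum_fin_lt M),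
    degree_X_pow]

lemma natDegree_Pm (m : ℕ) (M : Fin m → ℂ) : (Pm m M).natDegree = m :=
  natDegree_eq_of_degree_eq_some (degree_Pm m M)

lemma monic_Qp (m : ℕ) (s : Fin m → ℂ) : (Qp m s).Monic :=
  monic_prod_of_monic _ _ fun i _ => monic_X_sub_C (s i)

lemma natDegree_Qp (m : ℕ) (s : Fin m → ℂ) : (Qp m s).natDegree = m := by
  rw [Qp, natDegree_prod _ _ fun i _ => X_sub_C_ne_zero (s i)]
  simp

lemma coeff_sum_eq (m : ℕ) (M : Fin m → ℂ) (n : ℕ) :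
    (∑ j : Fin m, C (M j) * X ^ (j : ℕ)).coeff n = if h : n < m then M ⟨n, h⟩ else 0 := by
  rw [finset_sum_coeff]
  simp only [coeff_C_mul, coeff_X_pow, mul_ite, mul_one, mul_zero]
  split
  · next h =>
    rw [Finset.sum_eq_single (⟨n, h⟩ : Fin m)]
    · simp
    · intro b _ hb
      rw [if_neg]
      intro hnb
      exact hb (by ext; simp [hnb.symm])
    · simp
  · next h =>
    apply Finset.sum_eq_zero
    intro b _
    rw [if_neg]
    intro hnb
    exact h (hnb ▸ b.2)

lemma coeff_Pm (m : ℕ) (M : Fin m → ℂ) (j : Fin m) : (Pm m M).coeff j = -(M j) := by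
  rw [Pm, coeff_sub, coeff_X_pow, coeff_sum_eq, if_neg (by omega : ¬ (j : ℕ) = m),
    dif_pos j.2]
  simp

noncomputable def cmap (m : ℕ) (s : Fin m → ℂ) : Fin m → ℂ := fun j => -((Qp m s).coeff j)

lemma Qp_eq_Pm_iff {m : ℕ} {s M : Fin m → ℂ} : Qp m s = Pm m M ↔ M = cmap m s := by
  constructor
  · intro h
    funext j
    rw [cmap, h, coeff_Pm, neg_neg]
  · rintro rfl
    ext n
    rcases lt_trichotomy n m with hn | hn | hn
    · rw [coeff_Pm m _ ⟨n, hn⟩, cmap, neg_neg]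
    · subst hn
      have h1 : (Qp n s).coeff n = 1 := by
        have := (monic_Qp n s).coeff_natDegree
        rwa [natDegree_Qp] at this
      have h2 : (Pm n (cmap n s)).coeff n = 1 := by
        have := (monic_Pm n (cmap n s)).coeff_natDegree
        rwa [natDegree_Pm] at this
      rw [h1, h2]
    · rw [coeff_eq_zero_of_natDegree_lt (by rw [natDegree_Qp]; exact hn),
        coeff_eq_zero_of_natDegree_lt (by rw [natDegree_Pm]; exact hn)]

lemma continuous_cmap (m : ℕ) : Continuous (cmap m) := by
  apply continuous_pi
  intro j
  have key : ∀ s : Fin m → ℂ, cmap m s j =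
      -((-1) ^ (m - (j : ℕ)) *
        ∑ t ∈ Finset.powersetCard (m - (j : ℕ)) (univ : Finset (Fin m)), ∏ i ∈ t, s i) := by
    intro s
    have hcard : Multiset.card (List.ofFn s : Multiset ℂ) = m := by simp
    have h := Multiset.prod_X_sub_C_coeff (List.ofFn s : Multiset ℂ)
      (k := (j : ℕ)) (by rw [hcard]; exact j.2.le)
    rw [cmap, Qp_eq_multiset, h, hcard, ← Fin.univ_val_map (f := s), Finset.esymm_map_val]
  simp only [key]
  exact (continuous_const.mul (continuous_finset_sum _ fun t _ =>
    continuous_finset_prod _ fun i _ => continuous_apply i)).neg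


lemma root_bound {m : ℕ} {M s : Fin m → ℂ} (h : Qp m s = Pm m M) (i : Fin m) :
    ‖s i‖ ≤ max 1 (∑ j, ‖M j‖) := by
  cases m with
  | zero => exact i.elim0
  | succ k =>
    have hr : (Pm (k+1) M).eval (s i) = 0 := by
      rw [← h, Qp, eval_prod]
      exact Finset.prod_eq_zero (mem_univ i) (by simp)
    have hev : (s i) ^ (k+1) = ∑ j : Fin (k+1), M j * (s i) ^ (j : ℕ) := by
      rw [Pm, eval_sub, eval_pow, eval_X, eval_finset_sum] at hr
      simp only [eval_mul, eval_C, eval_pow, eval_X] at hr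
      exact sub_eq_zero.mp hr
    set z := s i with hz
    by_contra hlt
    push_neg at hlt
    have h1 : (1:ℝ) < ‖z‖ := lt_of_le_of_lt (le_max_left _ _) hlt
    have hS : (∑ j, ‖M j‖) < ‖z‖ := lt_of_le_of_lt (le_max_right _ _) hlt
    have hzpos : (0:ℝ) < ‖z‖ ^ k := pow_pos (by linarith) k
    have hb : ‖z‖ ^ (k+1) ≤ (∑ j, ‖M j‖) * ‖z‖ ^ k := by
      calc ‖z‖ ^ (k+1) = ‖z ^ (k+1)‖ := (norm_pow z (k+1)).symm
        _ = ‖∑ j : Fin (k+1), M j * z ^ (j:ℕ)‖ := by rw [hev]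
        _ ≤ ∑ j : Fin (k+1), ‖M j * z ^ (j:ℕ)‖ := norm_sum_le _ _
        _ ≤ ∑ j : Fin (k+1), ‖M j‖ * ‖z‖ ^ k := by
            apply Finset.sum_le_sum
            intro j _
            rw [norm_mul, norm_pow]
            exact mul_le_mul_of_nonneg_left
              (pow_le_pow_right₀ (le_of_lt h1) (Fin.is_le j)) (norm_nonneg _)
        _ = (∑ j, ‖M j‖) * ‖z‖ ^ k := by rw [Finset.sum_mul]
    have : ‖z‖ * ‖z‖ ^ k ≤ (∑ j, ‖M j‖) * ‖z‖ ^ k := by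
      rw [← pow_succ']; exact hb
    have := le_of_mul_le_mul_right this hzpos
    linarith


lemma exists_rootTuple (m : ℕ) (M : Fin m → ℂ) : ∃ s, Qp m s = Pm m M := by
  have hmonic := monic_Pm m M
  have hsplits : (Pm m M).Splits := IsAlgClosed.splits _
  have hprod := hsplits.eq_prod_roots_of_monic hmonic
  set l := (Pm m M).roots.toList with hl
  have hlen : l.length = m := by
    rw [hl, Multiset.length_toList, splits_iff_card_roots.mp hsplits, natDegree_Pm]
  refine ⟨fun i => l.get (Fin.cast hlen.symm i), ?_⟩
  rw [Qp_eq_multiset]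
  have hofn : List.ofFn (fun i : Fin m => l.get (Fin.cast hlen.symm i)) = l := by
    rw [List.ofFn_congr hlen.symm]
    exact List.ofFn_get l
  rw [hofn, Multiset.coe_toList]
  exact hprod.symm

lemma exists_perm_comp : ∀ {n : ℕ} (t r : Fin n → ℂ), (List.ofFn t).Perm (List.ofFn r) →
    ∃ σ : Equiv.Perm (Fin n), t = r ∘ σ := by
  intro n
  induction n with
  | zero => exact fun t r _ => ⟨1, funext fun i => i.elim0⟩
  | succ k ih =>
    intro t r h
    have ht0 : t 0 ∈ List.ofFn r := h.mem_iff.mp (by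
      rw [List.mem_ofFn]; exact ⟨0, rfl⟩)
    rw [List.mem_ofFn] at ht0
    obtain ⟨j, hj⟩ := ht0
    set r' : Fin (k+1) → ℂ := r ∘ (Equiv.swap 0 j) with hr'
    have h' : (List.ofFn t).Perm (List.ofFn r') :=
      h.trans ((Equiv.Perm.ofFn_comp_perm (Equiv.swap 0 j) r).symm)
    rw [List.ofFn_succ, List.ofFn_succ] at h'
    have hr'0 : r' 0 = t 0 := by
      rw [hr']; simp [Equiv.swap_apply_left, hj]
    rw [hr'0] at h'
    have htail := h'.cons_inv
    obtain ⟨σ', hσ'⟩ := ih (fun i => t i.succ) (fun i => r' i.succ) htail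
    refine ⟨Equiv.Perm.decomposeFin.symm (j, σ'), funext fun x => ?_⟩
    induction x using Fin.cases with
    | zero => simp [Equiv.Perm.decomposeFin_symm_apply_zero, hj.symm]
    | succ i =>
      have := congrFun hσ' i
      simp only [Function.comp_apply] at this ⊢
      rw [Equiv.Perm.decomposeFin_symm_apply_succ]
      rw [this, hr']
      rfl



lemma Qp_comp_perm (m : ℕ) (s : Fin m → ℂ) (σ : Equiv.Perm (Fin m)) :
    Qp m (s ∘ σ) = Qp m s :=
  Equiv.prod_comp σ fun i => X - C (s i)

lemma perm_of_Qp_eq {m : ℕ} {t r : Fin m → ℂ} (h : Qp m t = Qp m r) :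
    ∃ σ : Equiv.Perm (Fin m), t = r ∘ σ := by
  apply exists_perm_comp
  rw [← Multiset.coe_eq_coe]
  calc (List.ofFn t : Multiset ℂ) = (Qp m t).roots := by
        rw [Qp_eq_multiset, roots_multiset_prod_X_sub_C]
    _ = (Qp m r).roots := by rw [h]
    _ = (List.ofFn r : Multiset ℂ) := by
        rw [Qp_eq_multiset, roots_multiset_prod_X_sub_C]

lemma isCompact_T (m : ℕ) (M : Fin m → ℂ) :
    IsCompact {s : Fin m → ℂ | Qp m s = Pm m M} := by
  have hclosed : IsClosed {s : Fin m → ℂ | Qp m s = Pm m M} := by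
    have : {s : Fin m → ℂ | Qp m s = Pm m M} = cmap m ⁻¹' {M} := by
      ext s
      simp only [Set.mem_setOf_eq, Set.mem_preimage, Set.mem_singleton_iff]
      rw [Qp_eq_Pm_iff, eq_comm]
    rw [this]
    exact isClosed_singleton.preimage (continuous_cmap m)
  have hsub : {s : Fin m → ℂ | Qp m s = Pm m M} ⊆
      Metric.closedBall 0 (max 1 (∑ j, ‖M j‖)) := by
    intro s hs
    rw [Metric.mem_closedBall, dist_zero_right]
    rw [pi_norm_le_iff_of_nonneg (le_trans zero_le_one (le_max_left _ _))]
    exact fun i => root_bound hs i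
  exact (isCompact_closedBall _ _).of_isClosed_subset hclosed hsub

lemma exists_min (m : ℕ) (M r : Fin m → ℂ) :
    ∃ s, Qp m s = Pm m M ∧ ∀ s', Qp m s' = Pm m M → dist s r ≤ dist s' r := by
  obtain ⟨s, hs, hmin⟩ := (isCompact_T m M).exists_isMinOn (exists_rootTuple m M)
    ((continuous_id.dist continuous_const).continuousOn (f := fun s => dist s r))
  exact ⟨s, hs, fun s' hs' => hmin hs'⟩


lemma key (m : ℕ) (M₀ r : Fin m → ℂ) (hr : Qp m r = Pm m M₀) :
    ∀ ε > 0, ∃ δ > 0, ∀ M : Fin m → ℂ, dist M M₀ < δ →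
      ∃ s, Qp m s = Pm m M ∧ dist s r ≤ ε := by
  intro ε hε
  by_contra hc
  push_neg at hc
  have hc' : ∀ n : ℕ, ∃ M : Fin m → ℂ, dist M M₀ < 1 / (n + 1) ∧
      ∀ s, Qp m s = Pm m M → ε < dist s r := fun n => hc (1 / (n + 1)) (by positivity)
  choose Mseq hdist hfar using hc'
  choose sseq hs using fun n => exists_rootTuple m (Mseq n)
  have hM : Filter.Tendsto Mseq Filter.atTop (nhds M₀) := by
    rw [tendsto_iff_dist_tendsto_zero]
    exact squeeze_zero (fun n => dist_nonneg) (fun n => (hdist n).le)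
      tendsto_one_div_add_atTop_nhds_zero_nat
  set R : ℝ := max 1 (∑ j, (‖M₀ j‖ + 1)) with hR
  have hmem : ∀ n, sseq n ∈ Metric.closedBall (0 : Fin m → ℂ) R := by
    intro n
    rw [Metric.mem_closedBall, dist_zero_right,
      pi_norm_le_iff_of_nonneg (le_trans zero_le_one (le_max_left _ _))]
    intro i
    refine le_trans (root_bound (hs n) i) (max_le_max le_rfl ?_)
    apply Finset.sum_le_sum
    intro j _
    calc ‖Mseq n j‖ ≤ ‖M₀ j‖ + ‖Mseq n j - M₀ j‖ := by
          simpa using norm_add_le (M₀ j) (Mseq n j - M₀ j)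
      _ ≤ ‖M₀ j‖ + 1 := by
          gcongr
          calc ‖Mseq n j - M₀ j‖ = dist (Mseq n j) (M₀ j) := (dist_eq_norm _ _).symm
            _ ≤ dist (Mseq n) M₀ := dist_le_pi_dist _ _ j
            _ ≤ 1 := le_of_lt (lt_of_lt_of_le (hdist n) (by
                rw [div_le_one (by positivity)]; linarith [Nat.cast_nonneg (α := ℝ) n]))
  obtain ⟨t, _, φ, hφ, htend⟩ :=
    (isCompact_closedBall (0 : Fin m → ℂ) R).tendsto_subseq hmem
  have hcm : ∀ n, cmap m (sseq n) = Mseq n := fun n => (Qp_eq_Pm_iff.mp (hs n)).symm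
  have h1 : Filter.Tendsto (fun n => cmap m (sseq (φ n))) Filter.atTop (nhds (cmap m t)) :=
    ((continuous_cmap m).continuousAt.tendsto).comp htend
  have h2 : Filter.Tendsto (fun n => cmap m (sseq (φ n))) Filter.atTop (nhds M₀) := by
    simp only [hcm]
    exact hM.comp hφ.tendsto_atTop
  have hct : cmap m t = M₀ := tendsto_nhds_unique h1 h2
  have hQt : Qp m t = Qp m r := by
    rw [Qp_eq_Pm_iff.mpr hct.symm, hr]
  obtain ⟨σ, hσ⟩ := perm_of_Qp_eq hQt
  set s' : ℕ → Fin m → ℂ := fun n => sseq (φ n) ∘ σ.symm with hs'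
  have hs'Q : ∀ n, Qp m (s' n) = Pm m (Mseq (φ n)) := fun n => by
    rw [hs']; rw [Qp_comp_perm]; exact hs (φ n)
  have hts : t ∘ σ.symm = r := by
    funext i
    rw [Function.comp_apply, hσ, Function.comp_apply, Equiv.apply_symm_apply]
  have hs'tend : Filter.Tendsto s' Filter.atTop (nhds r) := by
    rw [tendsto_pi_nhds]
    intro i
    have := (tendsto_pi_nhds.mp htend) (σ.symm i)
    rw [← hts]
    exact this
  obtain ⟨N, hN⟩ := (Metric.tendsto_atTop.mp hs'tend) ε hε
  exact absurd (hN N le_rfl) (not_lt.mpr (hfar (φ N) (s' N) (hs'Q N)).le)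

end RootCont



open RootCont in
/-- for every point `M₀ ∈ ℂ^m` there exists a full set of roots
`λ^1, …, λ^m : ℂ^m → ℂ` of the family `M ↦ λ^m - a_{m-1} λ^{m-1} - ⋯ - a_0`,
each continuous at the point `M₀`. -/
theorem exists_full_root_set_continuousAt (m : ℕ) (hm : 1 ≤ m) (M₀ : Fin m → ℂ) :
    ∃ lam : Fin m → (Fin m → ℂ) → ℂ,
      (∀ i : Fin m, ContinuousAt (lam i) M₀) ∧
      ∀ M : Fin m → ℂ,
        X ^ m - ∑ j : Fin m, C (M j) * X ^ (j : ℕ) =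
          ∏ i : Fin m, (X - C (lam i M)) := by
  classical
  obtain ⟨r, hr⟩ := exists_rootTuple m M₀
  set lamFun : (Fin m → ℂ) → (Fin m → ℂ) := fun M => Classical.choose (exists_min m M r)
    with hlamdef
  have hspec : ∀ M, Qp m (lamFun M) = Pm m M ∧
      ∀ s', Qp m s' = Pm m M → dist (lamFun M) r ≤ dist s' r :=
    fun M => Classical.choose_spec (exists_min m M r)
  have hM₀ : lamFun M₀ = r := by
    have h0 : dist (lamFun M₀) r ≤ 0 := by
      simpa using (hspec M₀).2 r hr
    exact eq_of_dist_eq_zero (le_antisymm h0 dist_nonneg)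
  have hcont : ContinuousAt lamFun M₀ := by
    rw [Metric.continuousAt_iff]
    intro ε hε
    obtain ⟨δ, hδ, hkey⟩ := key m M₀ r hr (ε / 2) (by positivity)
    refine ⟨δ, hδ, ?_⟩
    intro M hM
    obtain ⟨s, hsQ, hsd⟩ := hkey M hM
    rw [hM₀]
    calc dist (lamFun M) r ≤ dist s r := (hspec M).2 s hsQ
      _ ≤ ε / 2 := hsd
      _ < ε := by linarith
  refine ⟨fun i M => lamFun M i, fun i => ?_, fun M => ?_⟩
  · exact ((continuous_apply i).continuousAt).comp hcont
  · have h := (hspec M).1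
    rw [Qp, Pm] at h
    exact h.symm
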